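/- Incremental transitive closure update correctness: let C be the transitive closure matrix of a directed graph G, and insert a new edge (i, j). Then the transitive closure of the new graph is C', where C'[u,v] = C[u,v] ∨ (C[u,i] ∧ C[j,v]) for all vertices u, v (with C[x,x] = 1 for all x). -/

import Mathlib

/-- Incremental transitive closure update correctness: after inserting edge `(i,j)`,
`v` is reachable from `u` iff it was already reachable, or `i` was reachable from `u`
and `v` reachable from `j`: `C'[u,v] = C[u,v] ∨ (C[u,i] ∧ C[j,v])`. -/
theorem insert_edge_closure {V : Type} (E : V → V → Prop) (i j : V) (u v : V) :
    Relation.ReflTransGen (fun a b => E a b ∨ (a = i ∧ b = j)) u v ↔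
      (Relation.ReflTransGen E u v ∨
        (Relation.ReflTransGen E u i ∧ Relation.ReflTransGen E j v)) := by
  constructor
  · intro h
    induction h with
    | refl => exact Or.inl .refl
    | tail _ hbc ih =>
      rcases hbc with hE | ⟨rfl, rfl⟩
      · rcases ih with h | ⟨h1, h2⟩
        · exact Or.inl (h.tail hE)
        · exact Or.inr ⟨h1, h2.tail hE⟩
      · rcases ih with h | ⟨h1, _⟩
        · exact Or.inr ⟨h, .refl⟩
        · exact Or.inr ⟨h1, .refl⟩
  · intro h
    have mono : ∀ {a b : V}, Relation.ReflTransGen E a b →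
        Relation.ReflTransGen (fun a b => E a b ∨ (a = i ∧ b = j)) a b :=
      fun h => Relation.ReflTransGen.mono (fun _ _ he => Or.inl he) _ _ h
    rcases h with h | ⟨h1, h2⟩
    · exact mono h
    · exact ((mono h1).tail (Or.inr ⟨rfl, rfl⟩)).trans (mono h2)
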